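/- arXiv:1906.06182 — 2 statements merged into one kernel-verified Lean document; each statement's English description precedes it below -/
import Mathlib

section
/- Assume the Herglotz field setup and let ξ : ℝ^d → ℝ^d and η : ℝ^d → ℝ be of class C¹. Suppose φ satisfies the generalized Euler–Lagrange equation, the infinitesimal invariance condition holds (for all x: Σ_ν (∂L/∂x^ν)(z(x)) ξ^ν(x) + (∂L/∂u)(z(x)) η(x) + Σ_ν (∂L/∂p_ν)(z(x)) ( ∂_ν η(x) − Σ_μ ∂_μ φ(x) ∂_ν ξ^μ(x) ) + L(z(x)) Σ_ν ∂_ν ξ^ν(x) = 0), and the canonical gauge condition holds: for all ν and x, ∂_ν f(x) Σ_μ ∂_μ s^μ(x) = Σ_μ ∂_μ f(x) ∂_ν s^μ(x). Then the current J^ν(x) := ( (∂L/∂p_ν)(z(x)) η(x) + L(z(x)) ξ^ν(x) − (∂L/∂p_ν)(z(x)) Σ_μ ∂_μ φ(x) ξ^μ(x) ) e^{−f(x)} is divergence-free: Σ_ν ∂_ν J^ν(x) = 0 for all x (Generalized Noether Theorem). -/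
/-- Partial derivative `∂_ν g` of a scalar field on `ℝ^d`. -/
noncomputable def pd {d : ℕ} (g : (Fin d → ℝ) → ℝ) (ν : Fin d) (x : Fin d → ℝ) : ℝ :=
  fderiv ℝ g x (Pi.single ν 1)

/-- `∂L/∂x^ν` for a Lagrangian `L(x, u, p, s)` on `ℝ^d × ℝ × ℝ^d × ℝ^d`. -/
noncomputable def pLx {d : ℕ} (L : (Fin d → ℝ) × ℝ × (Fin d → ℝ) × (Fin d → ℝ) → ℝ)
    (ν : Fin d) (z : (Fin d → ℝ) × ℝ × (Fin d → ℝ) × (Fin d → ℝ)) : ℝ :=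
  fderiv ℝ (fun y => L (y, z.2.1, z.2.2.1, z.2.2.2)) z.1 (Pi.single ν 1)

/-- `∂L/∂u` for a Lagrangian `L(x, u, p, s)`. -/
noncomputable def pLu {d : ℕ} (L : (Fin d → ℝ) × ℝ × (Fin d → ℝ) × (Fin d → ℝ) → ℝ)
    (z : (Fin d → ℝ) × ℝ × (Fin d → ℝ) × (Fin d → ℝ)) : ℝ :=
  deriv (fun w => L (z.1, w, z.2.2.1, z.2.2.2)) z.2.1

/-- `∂L/∂p_ν` for a Lagrangian `L(x, u, p, s)`. -/
noncomputable def pLp {d : ℕ} (L : (Fin d → ℝ) × ℝ × (Fin d → ℝ) × (Fin d → ℝ) → ℝ)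
    (ν : Fin d) (z : (Fin d → ℝ) × ℝ × (Fin d → ℝ) × (Fin d → ℝ)) : ℝ :=
  fderiv ℝ (fun q => L (z.1, z.2.1, q, z.2.2.2)) z.2.2.1 (Pi.single ν 1)

/-- `∂L/∂s_ν` for a Lagrangian `L(x, u, p, s)`. -/
noncomputable def pLs {d : ℕ} (L : (Fin d → ℝ) × ℝ × (Fin d → ℝ) × (Fin d → ℝ) → ℝ)
    (ν : Fin d) (z : (Fin d → ℝ) × ℝ × (Fin d → ℝ) × (Fin d → ℝ)) : ℝ :=
  fderiv ℝ (fun w => L (z.1, z.2.1, z.2.2.1, w)) z.2.2.2 (Pi.single ν 1)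

open Finset

section helpers

variable {d : ℕ} {L : (Fin d → ℝ) × ℝ × (Fin d → ℝ) × (Fin d → ℝ) → ℝ}
  {w : (Fin d → ℝ) × ℝ × (Fin d → ℝ) × (Fin d → ℝ)}

lemma fderiv_eq_sum_pd' {g : (Fin d → ℝ) → ℝ} {x : Fin d → ℝ} (v : Fin d → ℝ) :
    fderiv ℝ g x v = ∑ ν, v ν * pd g ν x := by
  have hv : v = ∑ ν : Fin d, v ν • (Pi.single ν 1 : Fin d → ℝ) := by
    ext j; simp [Pi.single_apply]
  conv_lhs => rw [hv]
  rw [map_sum]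
  simp [pd, smul_eq_mul]

lemma pd_mul' {g h : (Fin d → ℝ) → ℝ} {x : Fin d → ℝ} (ν : Fin d)
    (hg : DifferentiableAt ℝ g x) (hh : DifferentiableAt ℝ h x) :
    pd (fun y => g y * h y) ν x = g x * pd h ν x + pd g ν x * h x := by
  simp [pd, fderiv_fun_mul hg hh, mul_comm]

lemma pd_add' {g h : (Fin d → ℝ) → ℝ} {x : Fin d → ℝ} (ν : Fin d)
    (hg : DifferentiableAt ℝ g x) (hh : DifferentiableAt ℝ h x) :
    pd (fun y => g y + h y) ν x = pd g ν x + pd h ν x := by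
  simp [pd, fderiv_fun_add hg hh]

lemma pd_sub' {g h : (Fin d → ℝ) → ℝ} {x : Fin d → ℝ} (ν : Fin d)
    (hg : DifferentiableAt ℝ g x) (hh : DifferentiableAt ℝ h x) :
    pd (fun y => g y - h y) ν x = pd g ν x - pd h ν x := by
  simp [pd, fderiv_fun_sub hg hh]

lemma pd_sum' {g : Fin d → (Fin d → ℝ) → ℝ} {x : Fin d → ℝ} (ν : Fin d)
    (hg : ∀ i, DifferentiableAt ℝ (g i) x) :
    pd (fun y => ∑ i, g i y) ν x = ∑ i, pd (g i) ν x := by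
  simp only [pd]
  rw [fderiv_fun_sum (fun i _ => hg i)]
  simp

lemma pd_exp_neg' {f : (Fin d → ℝ) → ℝ} {x : Fin d → ℝ} (ν : Fin d)
    (hf : DifferentiableAt ℝ f x) :
    pd (fun y => Real.exp (-f y)) ν x = -(pd f ν x) * Real.exp (-f x) := by
  have h1 : DifferentiableAt ℝ (fun y => -f y) x := hf.neg
  simp only [pd]
  rw [fderiv_exp h1]
  have : fderiv ℝ (fun y => -f y) x = -fderiv ℝ f x := fderiv_neg
  simp [this, mul_comm]

lemma slot1 (hL : DifferentiableAt ℝ L w) (a : Fin d → ℝ) :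
    fderiv ℝ (fun y => L (y, w.2.1, w.2.2.1, w.2.2.2)) w.1 a
      = fderiv ℝ L w (a, 0, 0, 0) := by
  have hincl : HasFDerivAt (fun y : Fin d → ℝ => (y, w.2.1, w.2.2.1, w.2.2.2))
      ((ContinuousLinearMap.id ℝ (Fin d → ℝ)).prod 0) w.1 :=
    (hasFDerivAt_id w.1).prodMk (hasFDerivAt_const _ _)
  have hcomp : HasFDerivAt (fun y => L (y, w.2.1, w.2.2.1, w.2.2.2))
      ((fderiv ℝ L w).comp ((ContinuousLinearMap.id ℝ (Fin d → ℝ)).prod 0)) w.1 :=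
    hL.hasFDerivAt.comp w.1 hincl
  rw [hcomp.fderiv]; rfl

lemma slot2 (hL : DifferentiableAt ℝ L w) (b : ℝ) :
    b * pLu L w = fderiv ℝ L w (0, b, 0, 0) := by
  have hincl : HasFDerivAt (fun t : ℝ => (w.1, t, w.2.2.1, w.2.2.2))
      ((0 : ℝ →L[ℝ] (Fin d → ℝ)).prod
        (((ContinuousLinearMap.id ℝ ℝ)).prod 0)) w.2.1 :=
    (hasFDerivAt_const _ _).prodMk ((hasFDerivAt_id _).prodMk (hasFDerivAt_const _ _))
  have hcomp : HasFDerivAt (fun t : ℝ => L (w.1, t, w.2.2.1, w.2.2.2))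
      ((fderiv ℝ L w).comp ((0 : ℝ →L[ℝ] (Fin d → ℝ)).prod
        (((ContinuousLinearMap.id ℝ ℝ)).prod 0))) w.2.1 :=
    hL.hasFDerivAt.comp w.2.1 hincl
  have hd : pLu L w = fderiv ℝ L w (0, 1, 0, 0) := by
    rw [pLu, ← fderiv_apply_one_eq_deriv, hcomp.fderiv]; rfl
  have hb : ((0 : Fin d → ℝ), b, (0 : Fin d → ℝ), (0 : Fin d → ℝ))
      = b • ((0:Fin d → ℝ), (1:ℝ), (0:Fin d → ℝ), (0:Fin d → ℝ)) := by
    simp [Prod.smul_def]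
  rw [hb, map_smul, hd]; rfl

lemma slot3 (hL : DifferentiableAt ℝ L w) (c : Fin d → ℝ) :
    fderiv ℝ (fun q => L (w.1, w.2.1, q, w.2.2.2)) w.2.2.1 c
      = fderiv ℝ L w (0, 0, c, 0) := by
  have hincl : HasFDerivAt (fun q : Fin d → ℝ => (w.1, w.2.1, q, w.2.2.2))
      ((0 : (Fin d → ℝ) →L[ℝ] (Fin d → ℝ)).prod
        ((0 : (Fin d → ℝ) →L[ℝ] ℝ).prod
          ((ContinuousLinearMap.id ℝ (Fin d → ℝ)).prod 0))) w.2.2.1 :=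
    (hasFDerivAt_const _ _).prodMk ((hasFDerivAt_const _ _).prodMk
      ((hasFDerivAt_id _).prodMk (hasFDerivAt_const _ _)))
  have hcomp : HasFDerivAt (fun q => L (w.1, w.2.1, q, w.2.2.2))
      ((fderiv ℝ L w).comp ((0 : (Fin d → ℝ) →L[ℝ] (Fin d → ℝ)).prod
        ((0 : (Fin d → ℝ) →L[ℝ] ℝ).prod
          ((ContinuousLinearMap.id ℝ (Fin d → ℝ)).prod 0)))) w.2.2.1 :=
    hL.hasFDerivAt.comp w.2.2.1 hincl
  rw [hcomp.fderiv]; rfl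

lemma slot4 (hL : DifferentiableAt ℝ L w) (e : Fin d → ℝ) :
    fderiv ℝ (fun q => L (w.1, w.2.1, w.2.2.1, q)) w.2.2.2 e
      = fderiv ℝ L w (0, 0, 0, e) := by
  have hincl : HasFDerivAt (fun q : Fin d → ℝ => (w.1, w.2.1, w.2.2.1, q))
      ((0 : (Fin d → ℝ) →L[ℝ] (Fin d → ℝ)).prod
        ((0 : (Fin d → ℝ) →L[ℝ] ℝ).prod
          ((0 : (Fin d → ℝ) →L[ℝ] (Fin d → ℝ)).prod (ContinuousLinearMap.id ℝ _)))) w.2.2.2 :=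
    (hasFDerivAt_const _ _).prodMk ((hasFDerivAt_const _ _).prodMk
      ((hasFDerivAt_const _ _).prodMk (hasFDerivAt_id _)))
  have hcomp : HasFDerivAt (fun q => L (w.1, w.2.1, w.2.2.1, q))
      ((fderiv ℝ L w).comp ((0 : (Fin d → ℝ) →L[ℝ] (Fin d → ℝ)).prod
        ((0 : (Fin d → ℝ) →L[ℝ] ℝ).prod
          ((0 : (Fin d → ℝ) →L[ℝ] (Fin d → ℝ)).prod (ContinuousLinearMap.id ℝ _))))) w.2.2.2 :=
    hL.hasFDerivAt.comp w.2.2.2 hincl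
  rw [hcomp.fderiv]; rfl

lemma fderiv_L_decomp (hL : DifferentiableAt ℝ L w)
    (v : (Fin d → ℝ) × ℝ × (Fin d → ℝ) × (Fin d → ℝ)) :
    fderiv ℝ L w v = (∑ ν, v.1 ν * pLx L ν w) + v.2.1 * pLu L w
      + (∑ ν, v.2.2.1 ν * pLp L ν w) + (∑ ν, v.2.2.2 ν * pLs L ν w) := by
  have hv : v = ((v.1, 0, 0, 0) : _) + (0, v.2.1, 0, 0) + (0, 0, v.2.2.1, 0)
      + (0, 0, 0, v.2.2.2) := by
    ext <;> simp
  conv_lhs => rw [hv]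
  rw [map_add, map_add, map_add]
  rw [← slot1 hL, ← slot2 hL, ← slot3 hL, ← slot4 hL]
  rw [fderiv_eq_sum_pd' (g := fun y => L (y, w.2.1, w.2.2.1, w.2.2.2)),
    fderiv_eq_sum_pd' (g := fun q => L (w.1, w.2.1, q, w.2.2.2)),
    fderiv_eq_sum_pd' (g := fun q => L (w.1, w.2.1, w.2.2.1, q))]
  rfl

lemma noether_algebra (P DP X Fv Dη Xi Dφ : Fin d → ℝ)
    (W Dξ : Fin d → Fin d → ℝ) (U Lz Eta : ℝ)
    (hW : ∀ μ ν, W μ ν = W ν μ)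
    (hEL : U - (∑ ν, DP ν) + (∑ ν, Fv ν * P ν) = 0)
    (hinv : (∑ ν, X ν * Xi ν) + U * Eta
      + (∑ ν, P ν * (Dη ν - ∑ μ, Dφ μ * Dξ μ ν)) + Lz * (∑ ν, Dξ ν ν) = 0) :
    ∑ ν, ((DP ν * Eta + P ν * Dη ν
      + (X ν + U * Dφ ν + (∑ μ, W μ ν * P μ) + Fv ν * Lz) * Xi ν + Lz * Dξ ν ν
      - DP ν * (∑ μ, Dφ μ * Xi μ)
      - P ν * (∑ μ, (Dφ μ * Dξ μ ν + W μ ν * Xi μ)))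
      - Fv ν * (P ν * Eta + Lz * Xi ν - P ν * (∑ μ, Dφ μ * Xi μ))) = 0 := by
  set S0 := ∑ μ, Dφ μ * Xi μ with hS0
  have key : ∀ ν, ((DP ν * Eta + P ν * Dη ν
      + (X ν + U * Dφ ν + (∑ μ, W μ ν * P μ) + Fv ν * Lz) * Xi ν + Lz * Dξ ν ν
      - DP ν * S0 - P ν * (∑ μ, (Dφ μ * Dξ μ ν + W μ ν * Xi μ)))
      - Fv ν * (P ν * Eta + Lz * Xi ν - P ν * S0))
      = (DP ν * (Eta - S0) - (Fv ν * P ν) * (Eta - S0)) + U * (Dφ ν * Xi ν)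
        + (X ν * Xi ν + P ν * Dη ν - P ν * (∑ μ, Dφ μ * Dξ μ ν) + Lz * Dξ ν ν)
        + ((∑ μ, W μ ν * P μ) * Xi ν - P ν * (∑ μ, W μ ν * Xi μ)) := by
    intro ν
    rw [Finset.sum_add_distrib]
    ring
  rw [Finset.sum_congr rfl (fun ν _ => key ν)]
  rw [Finset.sum_add_distrib, Finset.sum_add_distrib, Finset.sum_add_distrib,
    Finset.sum_sub_distrib, Finset.sum_sub_distrib, ← Finset.sum_mul, ← Finset.sum_mul,
    ← Finset.mul_sum]
  have hD : (∑ ν, (∑ μ, W μ ν * P μ) * Xi ν) = ∑ ν, P ν * (∑ μ, W μ ν * Xi μ) := by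
    have h1 : (∑ ν, (∑ μ, W μ ν * P μ) * Xi ν) = ∑ ν, ∑ μ, W μ ν * P μ * Xi ν := by
      simp [Finset.sum_mul]
    have h2 : (∑ ν, P ν * (∑ μ, W μ ν * Xi μ)) = ∑ ν, ∑ μ, P ν * (W μ ν * Xi μ) := by
      simp [Finset.mul_sum]
    rw [h1, h2, Finset.sum_comm]
    apply Finset.sum_congr rfl; intro a _
    apply Finset.sum_congr rfl; intro b _
    rw [hW a b]
    ring
  have hB : (∑ ν, (X ν * Xi ν + P ν * Dη ν - P ν * (∑ μ, Dφ μ * Dξ μ ν) + Lz * Dξ ν ν))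
      = (∑ ν, X ν * Xi ν) + (∑ ν, P ν * (Dη ν - ∑ μ, Dφ μ * Dξ μ ν)) + Lz * (∑ ν, Dξ ν ν) := by
    conv_rhs => rw [Finset.mul_sum]
    rw [← Finset.sum_add_distrib, ← Finset.sum_add_distrib]
    apply Finset.sum_congr rfl; intro ν _
    ring
  rw [hB, hD]
  have hDP : (∑ ν, DP ν) = U + ∑ ν, Fv ν * P ν := by linarith
  rw [hDP]
  linear_combination hinv

end helpers

/-- **Generalized Noether Theorem for the Herglotz field problem.** Under the Herglotz
field setup, if `φ` satisfies the generalized Euler–Lagrange equation, the infinitesimal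
invariance condition holds, and the canonical gauge condition
`∂_ν f Σ_μ ∂_μ s^μ = Σ_μ ∂_μ f ∂_ν s^μ` holds, then the Noether current
`J^ν = (L_{p_ν} η + L ξ^ν − L_{p_ν} Σ_μ ∂_μφ ξ^μ) e^{−f}` is divergence-free. -/
theorem herglotz_generalized_noether
    (d : ℕ) (L : (Fin d → ℝ) × ℝ × (Fin d → ℝ) × (Fin d → ℝ) → ℝ)
    (hL : ContDiff ℝ 1 L)
    (φ : (Fin d → ℝ) → ℝ) (hφ : ContDiff ℝ 2 φ)
    (s : (Fin d → ℝ) → (Fin d → ℝ)) (hs : ContDiff ℝ 1 s)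
    (f : (Fin d → ℝ) → ℝ) (hf : ContDiff ℝ 1 f)
    (z : (Fin d → ℝ) → (Fin d → ℝ) × ℝ × (Fin d → ℝ) × (Fin d → ℝ))
    (hz : z = fun x => (x, φ x, fun ν => pd φ ν x, s x))
    (herglotz : ∀ x, (∑ ν, pd (fun y => s y ν) ν x) = L (z x))
    (hgrad : ∀ (ν : Fin d) (x : Fin d → ℝ), pLs L ν (z x) = pd f ν x)
    (hdiff : ∀ ν : Fin d, Differentiable ℝ (fun x => pLp L ν (z x)))
    (hEL : ∀ x, pLu L (z x) - (∑ ν, pd (fun y => pLp L ν (z y)) ν x)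
      + (∑ ν, pd f ν x * pLp L ν (z x)) = 0)
    (ξ : (Fin d → ℝ) → (Fin d → ℝ)) (hξ : ContDiff ℝ 1 ξ)
    (η : (Fin d → ℝ) → ℝ) (hη : ContDiff ℝ 1 η)
    (hinv : ∀ x, (∑ ν, pLx L ν (z x) * ξ x ν) + pLu L (z x) * η x
      + (∑ ν, pLp L ν (z x) * (pd η ν x - ∑ μ, pd φ μ x * pd (fun y => ξ y μ) ν x))
      + L (z x) * (∑ ν, pd (fun y => ξ y ν) ν x) = 0)
    (hgauge : ∀ (ν : Fin d) (x : Fin d → ℝ),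
      pd f ν x * (∑ μ, pd (fun y => s y μ) μ x) = ∑ μ, pd f μ x * pd (fun y => s y μ) ν x)
    (J : Fin d → (Fin d → ℝ) → ℝ)
    (hJ : J = fun ν y =>
      (pLp L ν (z y) * η y + L (z y) * ξ y ν
        - pLp L ν (z y) * (∑ μ, pd φ μ y * ξ y μ)) * Real.exp (-f y)) :
    ∀ x, (∑ ν, pd (J ν) ν x) = 0 := by
  intro x
  -- differentiability prerequisites
  have hφd : Differentiable ℝ φ := hφ.differentiable (by norm_num)
  have hfder : ContDiff ℝ 1 (fderiv ℝ φ) := by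
    have h2 : ContDiff ℝ (1 + 1) φ := by
      rw [one_add_one_eq_two]; exact hφ
    exact (contDiff_succ_iff_fderiv.mp h2).2.2
  have hfderd : Differentiable ℝ (fderiv ℝ φ) := hfder.differentiable one_ne_zero
  have hcoord : ∀ μ : Fin d, Differentiable ℝ (fun y => pd φ μ y) := by
    intro μ
    simp only [pd]
    exact hfderd.clm_apply (differentiable_const _)
  have hg3 : Differentiable ℝ (fun y => (fun μ => pd φ μ y : Fin d → ℝ)) :=
    differentiable_pi.mpr hcoord
  have hsd : Differentiable ℝ s := hs.differentiable one_ne_zero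
  have hsc : ∀ μ : Fin d, Differentiable ℝ (fun y => s y μ) :=
    fun μ => differentiable_pi.mp hsd μ
  have hξd : Differentiable ℝ ξ := hξ.differentiable one_ne_zero
  have hξc : ∀ μ : Fin d, Differentiable ℝ (fun y => ξ y μ) :=
    fun μ => differentiable_pi.mp hξd μ
  have hηd : Differentiable ℝ η := hη.differentiable one_ne_zero
  have hfd : Differentiable ℝ f := hf.differentiable one_ne_zero
  have hLd : Differentiable ℝ L := hL.differentiable one_ne_zero
  have hzdiff : Differentiable ℝ z := by
    rw [hz]
    exact differentiable_id.prodMk (hφd.prodMk (hg3.prodMk hsd))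
  have hLz : Differentiable ℝ (fun y => L (z y)) := hLd.comp hzdiff
  have hSd : Differentiable ℝ (fun y => ∑ μ, pd φ μ y * ξ y μ) :=
    Differentiable.fun_sum (fun μ _ => (hcoord μ).mul (hξc μ))
  -- the full derivative of z at x
  set zx := z x with hzx
  have hF : HasFDerivAt z
      ((ContinuousLinearMap.id ℝ (Fin d → ℝ)).prod ((fderiv ℝ φ x).prod
        ((fderiv ℝ (fun y => (fun μ => pd φ μ y : Fin d → ℝ)) x).prod (fderiv ℝ s x)))) x := by
    rw [hz]
    exact (hasFDerivAt_id x).prodMk (((hφd x).hasFDerivAt).prodMk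
      (((hg3 x).hasFDerivAt).prodMk ((hsd x).hasFDerivAt)))
  have hcomp : HasFDerivAt (fun y => L (z y))
      ((fderiv ℝ L zx).comp
        ((ContinuousLinearMap.id ℝ (Fin d → ℝ)).prod ((fderiv ℝ φ x).prod
          ((fderiv ℝ (fun y => (fun μ => pd φ μ y : Fin d → ℝ)) x).prod (fderiv ℝ s x))))) x :=
    (hLd zx).hasFDerivAt.comp x hF
  -- chain rule for the composite Lagrangian
  have hchain : ∀ ν, pd (fun y => L (z y)) ν x
      = pLx L ν zx + pd φ ν x * pLu L zx
        + (∑ μ, pd (fun y => pd φ μ y) ν x * pLp L μ zx)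
        + (∑ μ, pd (fun y => s y μ) ν x * pLs L μ zx) := by
    intro ν
    have hzc : zx = (zx.1, zx.2.1, zx.2.2.1, zx.2.2.2) := rfl
    have h0 : pd (fun y => L (z y)) ν x
        = fderiv ℝ L zx ((Pi.single ν 1 : Fin d → ℝ),
            fderiv ℝ φ x (Pi.single ν 1),
            fderiv ℝ (fun y => (fun μ => pd φ μ y : Fin d → ℝ)) x (Pi.single ν 1),
            fderiv ℝ s x (Pi.single ν 1)) := by
      rw [pd, hcomp.fderiv]; rfl
    rw [h0, fderiv_L_decomp (hLd zx)]
    have hA : (∑ μ, (Pi.single ν 1 : Fin d → ℝ) μ * pLx L μ zx) = pLx L ν zx := by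
      rw [Finset.sum_eq_single ν]
      · simp
      · intro b _ hb; simp [Pi.single_apply, hb]
      · simp
    have hgpi : fderiv ℝ (fun y => (fun μ => pd φ μ y : Fin d → ℝ)) x
        = ContinuousLinearMap.pi (fun μ => fderiv ℝ (fun y => pd φ μ y) x) :=
      fderiv_pi (fun μ => (hcoord μ) x)
    have hspi : fderiv ℝ s x
        = ContinuousLinearMap.pi (fun μ => fderiv ℝ (fun y => s y μ) x) :=
      fderiv_pi (fun μ => (hsc μ) x)
    rw [hA, hgpi, hspi]
    simp only [ContinuousLinearMap.pi_apply]
    rfl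
  -- symmetry of second derivatives
  have hsym : ∀ μ ν, pd (fun y => pd φ μ y) ν x = pd (fun y => pd φ ν y) μ x := by
    have hsnd : IsSymmSndFDerivAt ℝ φ x := hφ.contDiffAt.isSymmSndFDerivAt (by simp)
    have h1 : ∀ κ τ : Fin d, pd (fun y => pd φ κ y) τ x
        = fderiv ℝ (fderiv ℝ φ) x (Pi.single τ 1) (Pi.single κ 1) := by
      intro κ τ
      have h2 : pd (fun y => pd φ κ y) τ x
          = fderiv ℝ (fun y => (fderiv ℝ φ y) (Pi.single κ 1)) x (Pi.single τ 1) := rfl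
      rw [h2, fderiv_clm_apply (hfderd x) (differentiableAt_const _)]
      simp
    intro μ ν
    rw [h1, h1, hsnd]
  -- pointwise computation of the divergence of the current
  have hJν : ∀ ν, pd (J ν) ν x
      = ((pd (fun y => pLp L ν (z y)) ν x * η x + pLp L ν zx * pd η ν x
        + (pLx L ν zx + pLu L zx * pd φ ν x
            + (∑ μ, pd (fun y => pd φ μ y) ν x * pLp L μ zx)
            + pd f ν x * L zx) * ξ x ν
        + L zx * pd (fun y => ξ y ν) ν x
        - pd (fun y => pLp L ν (z y)) ν x * (∑ μ, pd φ μ x * ξ x μ)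
        - pLp L ν zx * (∑ μ, (pd φ μ x * pd (fun y => ξ y μ) ν x
            + pd (fun y => pd φ μ y) ν x * ξ x μ)))
        - pd f ν x * (pLp L ν zx * η x + L zx * ξ x ν
            - pLp L ν zx * (∑ μ, pd φ μ x * ξ x μ)))
        * Real.exp (-f x) := by
    intro ν
    have hKd : DifferentiableAt ℝ (fun y => pLp L ν (z y) * η y + L (z y) * ξ y ν
        - pLp L ν (z y) * (∑ μ, pd φ μ y * ξ y μ)) x :=
      ((((hdiff ν) x).mul (hηd x)).add ((hLz x).mul ((hξc ν) x))).sub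
        (((hdiff ν) x).mul (hSd x))
    have hexpd : DifferentiableAt ℝ (fun y => Real.exp (-f y)) x :=
      ((hfd x).neg).exp
    have e1 : pd (J ν) ν x
        = (pLp L ν zx * η x + L zx * ξ x ν - pLp L ν zx * (∑ μ, pd φ μ x * ξ x μ))
            * (-(pd f ν x) * Real.exp (-f x))
          + pd (fun y => pLp L ν (z y) * η y + L (z y) * ξ y ν
              - pLp L ν (z y) * (∑ μ, pd φ μ y * ξ y μ)) ν x * Real.exp (-f x) := by
      rw [hJ]
      rw [pd_mul' ν hKd hexpd, pd_exp_neg' ν (hfd x)]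
    rw [e1]
    have e2 : pd (fun y => pLp L ν (z y) * η y + L (z y) * ξ y ν
          - pLp L ν (z y) * (∑ μ, pd φ μ y * ξ y μ)) ν x
        = (pLp L ν zx * pd η ν x + pd (fun y => pLp L ν (z y)) ν x * η x)
          + (L zx * pd (fun y => ξ y ν) ν x + pd (fun y => L (z y)) ν x * ξ x ν)
          - (pLp L ν zx * pd (fun y => ∑ μ, pd φ μ y * ξ y μ) ν x
              + pd (fun y => pLp L ν (z y)) ν x * (∑ μ, pd φ μ x * ξ x μ)) := by
      rw [pd_sub' ν ((((hdiff ν) x).fun_mul (hηd x)).fun_add ((hLz x).fun_mul ((hξc ν) x)))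
          (((hdiff ν) x).fun_mul (hSd x)),
        pd_add' ν (((hdiff ν) x).fun_mul (hηd x)) ((hLz x).fun_mul ((hξc ν) x)),
        pd_mul' ν ((hdiff ν) x) (hηd x),
        pd_mul' ν (hLz x) ((hξc ν) x),
        pd_mul' ν ((hdiff ν) x) (hSd x)]
    have e3 : pd (fun y => ∑ μ, pd φ μ y * ξ y μ) ν x
        = ∑ μ, (pd φ μ x * pd (fun y => ξ y μ) ν x + pd (fun y => pd φ μ y) ν x * ξ x μ) := by
      rw [pd_sum' ν (fun μ => ((hcoord μ) x).fun_mul ((hξc μ) x))]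
      exact Finset.sum_congr rfl fun μ _ => pd_mul' ν ((hcoord μ) x) ((hξc μ) x)
    have e4 : (∑ μ, pd (fun y => s y μ) ν x * pLs L μ zx) = pd f ν x * L zx := by
      have : (∑ μ, pd (fun y => s y μ) ν x * pLs L μ zx)
          = ∑ μ, pd f μ x * pd (fun y => s y μ) ν x := by
        apply Finset.sum_congr rfl; intro μ _
        rw [hzx, hgrad μ x]; ring
      rw [this, ← hgauge ν x, herglotz x, ← hzx]
    have e5 : pd (fun y => L (z y)) ν x
        = pLx L ν zx + pLu L zx * pd φ ν x
          + (∑ μ, pd (fun y => pd φ μ y) ν x * pLp L μ zx) + pd f ν x * L zx := by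
      rw [hchain ν, e4]; ring
    rw [e2, e3, e5]
    ring
  rw [Finset.sum_congr rfl (fun ν _ => hJν ν), ← Finset.sum_mul]
  have halg := noether_algebra
    (fun ν => pLp L ν zx) (fun ν => pd (fun y => pLp L ν (z y)) ν x)
    (fun ν => pLx L ν zx) (fun ν => pd f ν x) (fun ν => pd η ν x)
    (fun ν => ξ x ν) (fun ν => pd φ ν x)
    (fun μ ν => pd (fun y => pd φ μ y) ν x) (fun μ ν => pd (fun y => ξ y μ) ν x)
    (pLu L zx) (L zx) (η x) hsym (hEL x) (hinv x)
  have hrw : (∑ ν, ((pd (fun y => pLp L ν (z y)) ν x * η x + pLp L ν zx * pd η ν x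
        + (pLx L ν zx + pLu L zx * pd φ ν x
            + (∑ μ, pd (fun y => pd φ μ y) ν x * pLp L μ zx)
            + pd f ν x * L zx) * ξ x ν
        + L zx * pd (fun y => ξ y ν) ν x
        - pd (fun y => pLp L ν (z y)) ν x * (∑ μ, pd φ μ x * ξ x μ)
        - pLp L ν zx * (∑ μ, (pd φ μ x * pd (fun y => ξ y μ) ν x
            + pd (fun y => pd φ μ y) ν x * ξ x μ)))
        - pd f ν x * (pLp L ν zx * η x + L zx * ξ x ν
            - pLp L ν zx * (∑ μ, pd φ μ x * ξ x μ)))) = 0 := by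
    exact halg
  rw [hrw, zero_mul]
end

section
/- Let μ > 0, T, γ ∈ ℝ and a < b. Let φ : ℝ × [a,b] → ℝ be of class C², satisfying the damped wave equation μ ∂_{tt}φ − T ∂_{xx}φ + γ ∂_tφ = 0, with fixed ends in the sense that ∂_tφ(t,a) = ∂_tφ(t,b) = 0 for all t. Let s¹ : ℝ × [a,b] → ℝ be of class C¹ with ∂_t s¹ = (μ/2)(∂_tφ)² − (T/2)(∂_xφ)² − (γ/μ)s¹ and s¹(0,x) = 0 for all x ∈ [a,b]. Then the total energy E(t) := ∫_a^b [ (μ/2)(∂_tφ(t,x))² + (T/2)(∂_xφ(t,x))² + (γ/μ)s¹(t,x) ] dx satisfies, for all t, E(t) = e^{−(γ/μ)t} ∫_a^b [ (μ/2)(∂_tφ(0,x))² + (T/2)(∂_xφ(0,x))² ] dx; i.e. the total energy decreases exponentially in time. -/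
/-- Partial derivative `∂_t g` of a function on the `(t,x)` plane. -/
noncomputable def ptd (g : ℝ × ℝ → ℝ) (p : ℝ × ℝ) : ℝ :=
  deriv (fun τ => g (τ, p.2)) p.1

/-- Partial derivative `∂_x g` of a function on the `(t,x)` plane. -/
noncomputable def pxd (g : ℝ × ℝ → ℝ) (p : ℝ × ℝ) : ℝ :=
  deriv (fun y => g (p.1, y)) p.2


lemma hasDerivAt_fst {g : ℝ × ℝ → ℝ} {t x : ℝ} (hg : DifferentiableAt ℝ g (t, x)) :
    HasDerivAt (fun τ => g (τ, x)) (ptd g (t, x)) t := by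
  have h1 : HasDerivAt (fun τ : ℝ => (τ, x)) ((1 : ℝ), (0 : ℝ)) t :=
    (hasDerivAt_id t).prodMk (hasDerivAt_const t x)
  have h2 := hg.hasFDerivAt.comp_hasDerivAt t h1
  have h3 : ptd g (t, x) = fderiv ℝ g (t, x) (1, 0) := h2.deriv
  rw [h3]; exact h2

lemma hasDerivAt_snd {g : ℝ × ℝ → ℝ} {t x : ℝ} (hg : DifferentiableAt ℝ g (t, x)) :
    HasDerivAt (fun y => g (t, y)) (pxd g (t, x)) x := by
  have h1 : HasDerivAt (fun y : ℝ => (t, y)) ((0 : ℝ), (1 : ℝ)) x :=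
    (hasDerivAt_const x t).prodMk (hasDerivAt_id x)
  have h2 := hg.hasFDerivAt.comp_hasDerivAt x h1
  have h3 : pxd g (t, x) = fderiv ℝ g (t, x) (0, 1) := h2.deriv
  rw [h3]; exact h2

lemma ptd_eq_fderiv {g : ℝ × ℝ → ℝ} {p : ℝ × ℝ} (hg : DifferentiableAt ℝ g p) :
    ptd g p = fderiv ℝ g p (1, 0) := by
  obtain ⟨t, x⟩ := p
  exact (hasDerivAt_fst hg).deriv.symm.trans ((hg.hasFDerivAt.comp_hasDerivAt t
    ((hasDerivAt_id t).prodMk (hasDerivAt_const t x))).deriv)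

lemma pxd_eq_fderiv {g : ℝ × ℝ → ℝ} {p : ℝ × ℝ} (hg : DifferentiableAt ℝ g p) :
    pxd g p = fderiv ℝ g p (0, 1) := by
  obtain ⟨t, x⟩ := p
  exact (hasDerivAt_snd hg).deriv.symm.trans ((hg.hasFDerivAt.comp_hasDerivAt x
    ((hasDerivAt_const x t).prodMk (hasDerivAt_id x))).deriv)

lemma contDiff_ptd {g : ℝ × ℝ → ℝ} (hg : ContDiff ℝ 2 g) : ContDiff ℝ 1 (ptd g) := by
  have he : ptd g = fun p => fderiv ℝ g p (1, 0) :=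
    funext fun p => ptd_eq_fderiv ((hg.differentiable two_ne_zero) p)
  rw [he]
  exact (hg.fderiv_right (by norm_num)).clm_apply contDiff_const

lemma contDiff_pxd {g : ℝ × ℝ → ℝ} (hg : ContDiff ℝ 2 g) : ContDiff ℝ 1 (pxd g) := by
  have he : pxd g = fun p => fderiv ℝ g p (0, 1) :=
    funext fun p => pxd_eq_fderiv ((hg.differentiable two_ne_zero) p)
  rw [he]
  exact (hg.fderiv_right (by norm_num)).clm_apply contDiff_const

lemma continuous_ptd {g : ℝ × ℝ → ℝ} (hg : ContDiff ℝ 1 g) : Continuous (ptd g) := by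
  have he : ptd g = fun p => fderiv ℝ g p (1, 0) :=
    funext fun p => ptd_eq_fderiv ((hg.differentiable one_ne_zero) p)
  rw [he]
  exact (hg.continuous_fderiv one_ne_zero).clm_apply continuous_const

lemma continuous_pxd {g : ℝ × ℝ → ℝ} (hg : ContDiff ℝ 1 g) : Continuous (pxd g) := by
  have he : pxd g = fun p => fderiv ℝ g p (0, 1) :=
    funext fun p => pxd_eq_fderiv ((hg.differentiable one_ne_zero) p)
  rw [he]
  exact (hg.continuous_fderiv one_ne_zero).clm_apply continuous_const

lemma clairaut {φ : ℝ × ℝ → ℝ} (hφ : ContDiff ℝ 2 φ) (p : ℝ × ℝ) :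
    ptd (pxd φ) p = pxd (ptd φ) p := by
  have hd1 : Differentiable ℝ φ := hφ.differentiable two_ne_zero
  have hdf : Differentiable ℝ (fderiv ℝ φ) :=
    (hφ.fderiv_right (le_refl _)).differentiable one_ne_zero
  have hpx : pxd φ = fun q => (ContinuousLinearMap.apply ℝ ℝ ((0:ℝ),(1:ℝ))) (fderiv ℝ φ q) :=
    funext fun q => pxd_eq_fderiv (hd1 q)
  have hpt : ptd φ = fun q => (ContinuousLinearMap.apply ℝ ℝ ((1:ℝ),(0:ℝ))) (fderiv ℝ φ q) :=
    funext fun q => ptd_eq_fderiv (hd1 q)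
  have e1 : ptd (pxd φ) p = fderiv ℝ (pxd φ) p (1, 0) :=
    ptd_eq_fderiv (((contDiff_pxd hφ).differentiable one_ne_zero) p)
  have e2 : pxd (ptd φ) p = fderiv ℝ (ptd φ) p (0, 1) :=
    pxd_eq_fderiv (((contDiff_ptd hφ).differentiable one_ne_zero) p)
  have f1 : fderiv ℝ (pxd φ) p = ((ContinuousLinearMap.apply ℝ ℝ ((0:ℝ),(1:ℝ))).comp
      (fderiv ℝ (fderiv ℝ φ) p)) := by
    rw [hpx]
    exact (((ContinuousLinearMap.apply ℝ ℝ ((0:ℝ),(1:ℝ))).hasFDerivAt).comp p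
      (hdf p).hasFDerivAt).fderiv
  have f2 : fderiv ℝ (ptd φ) p = ((ContinuousLinearMap.apply ℝ ℝ ((1:ℝ),(0:ℝ))).comp
      (fderiv ℝ (fderiv ℝ φ) p)) := by
    rw [hpt]
    exact (((ContinuousLinearMap.apply ℝ ℝ ((1:ℝ),(0:ℝ))).hasFDerivAt).comp p
      (hdf p).hasFDerivAt).fderiv
  have hsymm : IsSymmSndFDerivAt ℝ φ p := hφ.contDiffAt.isSymmSndFDerivAt (by simp)
  rw [e1, e2, f1, f2]
  simpa using hsymm (1, 0) (0, 1)


/-- **Exponential decay of the total energy of a damped vibrating string with fixed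
ends.** If `μ ∂_{tt}φ − T ∂_{xx}φ + γ ∂_tφ = 0` on `ℝ × [a,b]`, the ends are fixed
(`∂_tφ(t,a) = ∂_tφ(t,b) = 0`), and `∂_t s¹ = (μ/2)(∂_tφ)² − (T/2)(∂_xφ)² − (γ/μ)s¹` with
`s¹(0,·) = 0`, then the total energy
`E(t) = ∫_a^b [(μ/2)(∂_tφ)² + (T/2)(∂_xφ)² + (γ/μ)s¹] dx` satisfies
`E(t) = e^{−(γ/μ)t} ∫_a^b [(μ/2)(∂_tφ(0,x))² + (T/2)(∂_xφ(0,x))²] dx`. -/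
theorem vibrating_string_total_energy_decay
    (μ T γ a b : ℝ) (hμ : 0 < μ) (hab : a < b)
    (φ : ℝ × ℝ → ℝ) (hφ : ContDiff ℝ 2 φ)
    (hwave : ∀ (t : ℝ), ∀ x ∈ Set.Icc a b,
      μ * ptd (ptd φ) (t, x) - T * pxd (pxd φ) (t, x) + γ * ptd φ (t, x) = 0)
    (hends : ∀ t : ℝ, ptd φ (t, a) = 0 ∧ ptd φ (t, b) = 0)
    (s1 : ℝ × ℝ → ℝ) (hs1 : ContDiff ℝ 1 s1)
    (hs1eq : ∀ (t : ℝ), ∀ x ∈ Set.Icc a b,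
      ptd s1 (t, x) = μ / 2 * (ptd φ (t, x)) ^ 2 - T / 2 * (pxd φ (t, x)) ^ 2
        - γ / μ * s1 (t, x))
    (hs10 : ∀ x ∈ Set.Icc a b, s1 (0, x) = 0) :
    ∀ t : ℝ,
      (∫ x in a..b, (μ / 2 * (ptd φ (t, x)) ^ 2 + T / 2 * (pxd φ (t, x)) ^ 2
          + γ / μ * s1 (t, x)))
        = Real.exp (-(γ / μ) * t)
          * ∫ x in a..b, (μ / 2 * (ptd φ (0, x)) ^ 2 + T / 2 * (pxd φ (0, x)) ^ 2) := by
  have hμ' : μ ≠ 0 := ne_of_gt hμ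
  set c : ℝ := γ / μ with hc
  -- regularity facts
  have hφt : ContDiff ℝ 1 (ptd φ) := contDiff_ptd hφ
  have hφx : ContDiff ℝ 1 (pxd φ) := contDiff_pxd hφ
  have hφtd : Differentiable ℝ (ptd φ) := hφt.differentiable one_ne_zero
  have hφxd : Differentiable ℝ (pxd φ) := hφx.differentiable one_ne_zero
  have hs1d : Differentiable ℝ s1 := hs1.differentiable one_ne_zero
  have hcφt : Continuous (ptd φ) := hφt.continuous
  have hcφx : Continuous (pxd φ) := hφx.continuous
  -- the integrand of exp(ct) * energy density, and its t-derivative Dc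
  set G : ℝ × ℝ → ℝ := fun p =>
    Real.exp (c * p.1) * (μ / 2 * (ptd φ p) ^ 2 + T / 2 * (pxd φ p) ^ 2 + c * s1 p) with hG
  set Dc : ℝ × ℝ → ℝ := fun p =>
    Real.exp (c * p.1) * (T * (pxd (ptd φ) p * pxd φ p + ptd φ p * pxd (pxd φ) p)) with hDc
  have hGcont : Continuous G := by
    apply Continuous.mul
    · exact Real.continuous_exp.comp (continuous_const.mul continuous_fst)
    · exact (((continuous_const.mul (hcφt.pow 2)).add
        (continuous_const.mul (hcφx.pow 2))).add (continuous_const.mul hs1.continuous))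
  have hDccont : Continuous Dc := by
    apply Continuous.mul
    · exact Real.continuous_exp.comp (continuous_const.mul continuous_fst)
    · exact continuous_const.mul (((continuous_pxd hφt).mul hcφx).add
        (hcφt.mul (continuous_pxd hφx)))
  -- pointwise t-derivative identity on the strip
  have hkey : ∀ (t : ℝ), ∀ x ∈ Set.Icc a b,
      HasDerivAt (fun τ => G (τ, x)) (Dc (t, x)) t := by
    intro t x hx
    have hf' : HasDerivAt (fun τ => ptd φ (τ, x)) (ptd (ptd φ) (t, x)) t :=
      hasDerivAt_fst (hφtd _)
    have hg' : HasDerivAt (fun τ => pxd φ (τ, x)) (ptd (pxd φ) (t, x)) t :=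
      hasDerivAt_fst (hφxd _)
    have hs' : HasDerivAt (fun τ => s1 (τ, x)) (ptd s1 (t, x)) t :=
      hasDerivAt_fst (hs1d _)
    have hexp : HasDerivAt (fun τ => Real.exp (c * τ)) (Real.exp (c * t) * c) t := by
      simpa using (HasDerivAt.exp ((hasDerivAt_id t).const_mul c))
    have hinner := (((hf'.pow 2).const_mul (μ / 2)).add
      ((hg'.pow 2).const_mul (T / 2))).add (hs'.const_mul c)
    have htot := hexp.mul hinner
    have hA : ptd (ptd φ) (t, x) = (T * pxd (pxd φ) (t, x) - γ * ptd φ (t, x)) / μ := by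
      have := hwave t x hx
      field_simp
      linarith
    have hval : Real.exp (c * t) * c *
          (μ / 2 * ptd φ (t, x) ^ 2 + T / 2 * pxd φ (t, x) ^ 2 + c * s1 (t, x)) +
        Real.exp (c * t) *
          (μ / 2 * (↑2 * ptd φ (t, x) ^ (2 - 1) * ptd (ptd φ) (t, x)) +
            T / 2 * (↑2 * pxd φ (t, x) ^ (2 - 1) * ptd (pxd φ) (t, x)) +
            c * ptd s1 (t, x)) = Dc (t, x) := by
      rw [hs1eq t x hx, clairaut hφ, hA, hDc, hc]
      simp only []
      field_simp
      ring
    exact hval ▸ htot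
  -- derivative of H at each point is zero
  have hH0 : ∀ t : ℝ, HasDerivAt (fun τ => ∫ x in a..b, G (τ, x)) 0 t := by
    intro t
    -- bound on a compact neighborhood
    obtain ⟨M, hM⟩ := (((isCompact_Icc (a := t - 1) (b := t + 1)).prod
      (isCompact_Icc (a := a) (b := b)))).exists_bound_of_continuousOn hDccont.continuousOn
    have main := intervalIntegral.hasDerivAt_integral_of_dominated_loc_of_deriv_le
      (F := fun τ x => G (τ, x)) (F' := fun τ x => Dc (τ, x)) (x₀ := t)
      (s := Metric.ball t 1) (bound := fun _ => M) (a := a) (b := b) (μ := MeasureTheory.volume)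
      (Metric.ball_mem_nhds t one_pos)
      (Filter.Eventually.of_forall fun τ =>
        (hGcont.comp (continuous_const.prodMk continuous_id)).aestronglyMeasurable)
      ((hGcont.comp (continuous_const.prodMk continuous_id)).intervalIntegrable a b)
      ((hDccont.comp (continuous_const.prodMk continuous_id)).aestronglyMeasurable)
      (Filter.Eventually.of_forall ?_)
      (intervalIntegrable_const)
      (Filter.Eventually.of_forall ?_)
    · have hzero : (∫ x in a..b, Dc (t, x)) = 0 := by
        have hftc : ∀ y ∈ Set.uIcc a b, HasDerivAt
            (fun y => Real.exp (c * t) * (T * (ptd φ (t, y) * pxd φ (t, y))))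
            (Dc (t, y)) y := by
          intro y _
          have hfx : HasDerivAt (fun y => ptd φ (t, y)) (pxd (ptd φ) (t, y)) y :=
            hasDerivAt_snd (hφtd _)
          have hgx : HasDerivAt (fun y => pxd φ (t, y)) (pxd (pxd φ) (t, y)) y :=
            hasDerivAt_snd (hφxd _)
          exact ((hfx.mul hgx).const_mul T).const_mul (Real.exp (c * t))
        rw [intervalIntegral.integral_eq_sub_of_hasDerivAt hftc
          ((hDccont.comp (continuous_const.prodMk continuous_id)).intervalIntegrable a b)]
        rcases hends t with ⟨h1, h2⟩
        simp [h1, h2]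
      rw [← hzero]
      exact main.2
    · intro x hx τ hτ
      have hx' : x ∈ Set.Icc a b := Set.Ioc_subset_Icc_self (by
        rwa [Set.uIoc_of_le hab.le] at hx)
      have hτ' : τ ∈ Set.Icc (t - 1) (t + 1) := by
        rw [Metric.mem_ball, Real.dist_eq] at hτ
        constructor <;> [linarith [abs_lt.mp hτ]; linarith [abs_lt.mp hτ]]
      exact hM (τ, x) ⟨hτ', hx'⟩
    · intro x hx τ hτ
      have hx' : x ∈ Set.Icc a b := Set.Ioc_subset_Icc_self (by
        rwa [Set.uIoc_of_le hab.le] at hx)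
      exact hkey τ x hx'
  -- H is constant
  have hconst : ∀ t : ℝ, (∫ x in a..b, G (t, x)) = ∫ x in a..b, G (0, x) := by
    intro t
    exact is_const_of_deriv_eq_zero (fun u => (hH0 u).differentiableAt)
      (fun u => (hH0 u).deriv) t 0
  intro t
  have h1 : (∫ x in a..b, G (t, x)) = Real.exp (c * t) *
      ∫ x in a..b, (μ / 2 * (ptd φ (t, x)) ^ 2 + T / 2 * (pxd φ (t, x)) ^ 2
        + c * s1 (t, x)) := by
    rw [← intervalIntegral.integral_const_mul]
  have h2 : (∫ x in a..b, G (0, x)) =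
      ∫ x in a..b, (μ / 2 * (ptd φ (0, x)) ^ 2 + T / 2 * (pxd φ (0, x)) ^ 2) := by
    apply intervalIntegral.integral_congr
    intro x hx
    rw [Set.uIcc_of_le hab.le] at hx
    simp [hG, hs10 x hx]
  have h3 := hconst t
  rw [h1, h2] at h3
  have hne : Real.exp (c * t) ≠ 0 := Real.exp_ne_zero _
  rw [neg_mul, Real.exp_neg, ← h3]
  rw [← mul_assoc, inv_mul_cancel₀ hne, one_mul]
end
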